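/- Let a PFA with n ≥ 4 states carefully synchronize some subset of size 4 of its state set. Then for every subset S of size 3 of the state set which is carefully synchronized by some word, the shortest word carefully synchronizing S has length strictly less than C(n,3) + C(n,2), where C denotes the binomial coefficient. -/
import Mathlib

/-- Action of a PFA (partial) transition function on a subset of states along a word:
one step maps `S` to `{δ q a : q ∈ S}` if `δ q a` is defined for all `q ∈ S`,
and to `∅` otherwise. -/
def pfaRun {n m : ℕ} (δ : Fin n → Fin m → Option (Fin n)) :
    Finset (Fin n) → List (Fin m) → Finset (Fin n)
  | S, [] => S
  | S, a :: w =>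
      pfaRun δ
        (if ∀ q ∈ S, (δ q a).isSome then S.image (fun q => (δ q a).getD q) else ∅) w

/-- A word `w` carefully synchronizes the subset `S` in the PFA `δ`. -/
def pfaSync {n m : ℕ} (δ : Fin n → Fin m → Option (Fin n)) (S : Finset (Fin n))
    (w : List (Fin m)) : Prop :=
  (pfaRun δ S w).card = 1

/-- `l` is the length of a shortest word carefully synchronizing `S` in the PFA `δ`. -/
def pfaShortestSync {n m : ℕ} (δ : Fin n → Fin m → Option (Fin n)) (S : Finset (Fin n))
    (l : ℕ) : Prop :=
  (∃ w, pfaSync δ S w ∧ w.length = l) ∧ ∀ w, pfaSync δ S w → l ≤ w.length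

lemma pfaRun_cons {n m : ℕ} (δ : Fin n → Fin m → Option (Fin n)) (S : Finset (Fin n))
    (a : Fin m) (w : List (Fin m)) :
    pfaRun δ S (a :: w) = pfaRun δ
      (if ∀ q ∈ S, (δ q a).isSome then S.image (fun q => (δ q a).getD q) else ∅) w := rfl

lemma pfaRun_append {n m : ℕ} (δ : Fin n → Fin m → Option (Fin n))
    (w1 w2 : List (Fin m)) (S : Finset (Fin n)) :
    pfaRun δ S (w1 ++ w2) = pfaRun δ (pfaRun δ S w1) w2 := by
  induction w1 generalizing S with
  | nil => rfl
  | cons a w ih => simp [pfaRun_cons, ih]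

lemma pfaRun_empty {n m : ℕ} (δ : Fin n → Fin m → Option (Fin n)) (w : List (Fin m)) :
    pfaRun δ ∅ w = ∅ := by
  induction w with
  | nil => rfl
  | cons a w ih => simpa [pfaRun_cons] using ih

lemma card_pfaRun_le {n m : ℕ} (δ : Fin n → Fin m → Option (Fin n)) (w : List (Fin m))
    (S : Finset (Fin n)) : (pfaRun δ S w).card ≤ S.card := by
  induction w generalizing S with
  | nil => exact le_rfl
  | cons a w ih =>
    rw [pfaRun_cons]
    refine le_trans (ih _) ?_
    split
    · exact Finset.card_image_le
    · simp

lemma exists_merge {n m : ℕ} (δ : Fin n → Fin m → Option (Fin n)) :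
    ∀ (w : List (Fin m)) (S : Finset (Fin n)), S.card = 4 → (pfaRun δ S w).card = 1 →
      ∃ (B : Finset (Fin n)) (a : Fin m), B.card = 4 ∧ (∀ q ∈ B, (δ q a).isSome) ∧
        (B.image (fun q => (δ q a).getD q)).card ≤ 3 := by
  intro w
  induction w with
  | nil => intro S h4 h1; rw [pfaRun] at h1; omega
  | cons a w ih =>
    intro S h4 h1
    rw [pfaRun_cons] at h1
    by_cases hdef : ∀ q ∈ S, (δ q a).isSome
    · rw [if_pos hdef] at h1
      rcases le_or_gt (S.image (fun q => (δ q a).getD q)).card 3 with hle | hlt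
      · exact ⟨S, a, h4, hdef, hle⟩
      · have hc : (S.image (fun q => (δ q a).getD q)).card = 4 :=
          le_antisymm (h4 ▸ Finset.card_image_le) hlt
        exact ih _ hc h1
    · rw [if_neg hdef, pfaRun_empty] at h1
      simp at h1

theorem stmt7 (n m : ℕ) (hn : 4 ≤ n) (δ : Fin n → Fin m → Option (Fin n))
    (h4 : ∃ S4 : Finset (Fin n), S4.card = 4 ∧ ∃ w, pfaSync δ S4 w) :
    ∀ (S : Finset (Fin n)) (l : ℕ), S.card = 3 → pfaShortestSync δ S l →
      l < n.choose 3 + n.choose 2 := by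
  intro S l hS hshort
  obtain ⟨⟨w, hw, hwl⟩, hmin⟩ := hshort
  have hw1 : (pfaRun δ S w).card = 1 := hw
  set f : ℕ → Finset (Fin n) := fun i => pfaRun δ S (w.take i) with hf
  -- decomposition of prefixes
  have hdecomp : ∀ i j : ℕ, i ≤ j → f j = pfaRun δ (f i) ((w.take j).drop i) := by
    intro i j hij
    have h1 : w.take j = (w.take j).take i ++ (w.take j).drop i :=
      (List.take_append_drop _ _).symm
    calc f j = pfaRun δ S ((w.take j).take i ++ (w.take j).drop i) := by rw [← h1]
      _ = pfaRun δ (pfaRun δ S ((w.take j).take i)) ((w.take j).drop i) := pfaRun_append ..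
      _ = pfaRun δ (f i) ((w.take j).drop i) := by
          rw [hf]; rw [List.take_take, min_eq_left hij]
  have hmono : ∀ i j : ℕ, i ≤ j → (f j).card ≤ (f i).card := by
    intro i j hij
    rw [hdecomp i j hij]
    exact card_pfaRun_le ..
  -- distinctness of prefix sets
  have hinj : ∀ i j : ℕ, i < j → j ≤ l → f i ≠ f j := by
    intro i j hij hjl heq
    have hsync : pfaSync δ S (w.take i ++ w.drop j) := by
      show (pfaRun δ S (w.take i ++ w.drop j)).card = 1
      rw [pfaRun_append]
      have : pfaRun δ (f j) (w.drop j) = pfaRun δ S w := by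
        rw [← pfaRun_append, List.take_append_drop]
      rw [show pfaRun δ S (w.take i) = f i from rfl, heq, this]
      exact hw1
    have hlenle := hmin _ hsync
    have hlen : (w.take i ++ w.drop j).length = min i l + (l - j) := by
      simp [hwl]
    omega
  -- cardinalities along the run
  have hf0 : f 0 = S := rfl
  have hcard : ∀ i : ℕ, i < l → (f i).card = 2 ∨ (f i).card = 3 := by
    intro i hil
    have h3 : (f i).card ≤ 3 := by
      have := hmono 0 i (Nat.zero_le _)
      rwa [hf0, hS] at this
    have h1 : (f i).card ≠ 1 := by
      intro h
      have hle := hmin (w.take i) h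
      have : (w.take i).length = min i l := by simp [hwl]
      omega
    have h0 : (f i).card ≠ 0 := by
      intro h
      have he : f i = ∅ := Finset.card_eq_zero.mp h
      have : pfaRun δ S w = ∅ := by
        conv_lhs => rw [← List.take_append_drop i w]
        rw [pfaRun_append, show pfaRun δ S (w.take i) = f i from rfl, he, pfaRun_empty]
      rw [this] at hw1
      simp at hw1
    omega
  -- the universe of sets of size 2 or 3
  set U : Finset (Finset (Fin n)) :=
    Finset.univ.powersetCard 3 ∪ Finset.univ.powersetCard 2 with hU
  have hmemU : ∀ T : Finset (Fin n), T.card = 2 ∨ T.card = 3 → T ∈ U := by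
    intro T hT
    rcases hT with h | h
    · exact Finset.mem_union_right _ (Finset.mem_powersetCard.mpr ⟨Finset.subset_univ _, h⟩)
    · exact Finset.mem_union_left _ (Finset.mem_powersetCard.mpr ⟨Finset.subset_univ _, h⟩)
  have hUcard : U.card = n.choose 3 + n.choose 2 := by
    rw [hU, Finset.card_union_of_disjoint, Finset.card_powersetCard,
      Finset.card_powersetCard, Finset.card_univ, Fintype.card_fin]
    rw [Finset.disjoint_left]
    intro T h3 h2
    have := (Finset.mem_powersetCard.mp h3).2
    have := (Finset.mem_powersetCard.mp h2).2
    omega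
  have hmaps : ∀ i ∈ Finset.range l, f i ∈ U := by
    intro i hi
    exact hmemU _ (hcard i (Finset.mem_range.mp hi))
  have hinjOn : Set.InjOn f (Finset.range l) := by
    intro i hi j hj heq
    simp only [Finset.coe_range, Set.mem_Iio] at hi hj
    by_contra hne
    rcases Nat.lt_or_ge i j with h | h
    · exact hinj i j h (le_of_lt hj) heq
    · exact hinj j i (lt_of_le_of_ne h (Ne.symm hne)) (le_of_lt hi) heq.symm
  have hle : l ≤ n.choose 3 + n.choose 2 := by
    have := Finset.card_le_card_of_injOn f hmaps hinjOn
    simpa [hUcard] using this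
  rcases lt_or_eq_of_le hle with h | heq
  · exact h
  exfalso
  -- equality case: all 2- and 3-subsets appear on the run
  have himg : (Finset.range l).image f = U := by
    apply Finset.eq_of_subset_of_card_le
    · intro T hT
      rcases Finset.mem_image.mp hT with ⟨i, hi, rfl⟩
      exact hmaps i hi
    · rw [Finset.card_image_of_injOn hinjOn, Finset.card_range, hUcard, heq]
  have hsurj : ∀ T : Finset (Fin n), T.card = 2 ∨ T.card = 3 → ∃ i, i < l ∧ f i = T := by
    intro T hT
    have : T ∈ (Finset.range l).image f := himg ▸ hmemU T hT
    rcases Finset.mem_image.mp this with ⟨i, hi, hfi⟩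
    exact ⟨i, Finset.mem_range.mp hi, hfi⟩
  -- extract a merging letter from the synchronizable 4-set
  obtain ⟨S4, hS4, w4, hw4⟩ := h4
  obtain ⟨B, a, hB4, hBdef, hBim⟩ := exists_merge δ w4 S4 hS4 hw4
  have hlt4 : (B.image (fun q => (δ q a).getD q)).card < B.card := by omega
  obtain ⟨p, hp, q, hq, hpq, hfpq⟩ :=
    Finset.exists_ne_map_eq_of_card_lt_of_maps_to hlt4
      (fun x hx => Finset.mem_image_of_mem _ hx)
  have hpqsub : ({p, q} : Finset (Fin n)) ⊆ B := by
    simp [Finset.insert_subset_iff, hp, hq]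
  have hpqcard : ({p, q} : Finset (Fin n)).card = 2 := Finset.card_pair hpq
  have hsd : (B \ {p, q}).card = 2 := by
    rw [Finset.card_sdiff_of_subset hpqsub, hpqcard, hB4]
  obtain ⟨r, s, hrs, hBrs⟩ := Finset.card_eq_two.mp hsd
  have hr : r ∈ B \ ({p, q} : Finset (Fin n)) := by rw [hBrs]; simp
  have hs : s ∈ B \ ({p, q} : Finset (Fin n)) := by rw [hBrs]; simp
  rw [Finset.mem_sdiff, Finset.mem_insert, Finset.mem_singleton] at hr hs
  push_neg at hr hs
  obtain ⟨hrB, hrpq⟩ := hr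
  obtain ⟨hsB, hspq⟩ := hs
  -- the key shortcut argument
  have key : ∀ x : Fin n, x ∈ B → ∀ i i' : ℕ, i < l → i' < l →
      f i = insert x {p, q} → (f i').card = 3 → i < i' → False := by
    intro x hxB i i' hil hi'l hfi hci' hii'
    set D : Finset (Fin n) := insert x {p, q} with hD
    have hDsub : D ⊆ B := by
      rw [hD]
      simp [Finset.insert_subset_iff, hxB, hp, hq]
    have hDdef : ∀ u ∈ D, (δ u a).isSome := fun u hu => hBdef u (hDsub hu)
    set C : Finset (Fin n) := D.image (fun u => (δ u a).getD u) with hC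
    have hCsub : C ⊆ {(δ x a).getD x, (δ p a).getD p} := by
      intro y hy
      rcases Finset.mem_image.mp hy with ⟨u, hu, rfl⟩
      rw [hD, Finset.mem_insert, Finset.mem_insert, Finset.mem_singleton] at hu
      rcases hu with rfl | rfl | rfl
      · simp
      · simp
      · rw [← hfpq]; simp
    have hC2 : C.card ≤ 2 :=
      le_trans (Finset.card_le_card hCsub)
        (le_trans (Finset.card_insert_le _ _) (by simp))
    have hC1 : 1 ≤ C.card := by
      rw [Nat.one_le_iff_ne_zero, Ne, Finset.card_eq_zero]
      intro h
      have : D.Nonempty := ⟨x, by rw [hD]; exact Finset.mem_insert_self _ _⟩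
      rcases this.image (fun u => (δ u a).getD u) with ⟨y, hy⟩
      rw [← hC, h] at hy
      exact absurd hy (Finset.notMem_empty y)
    have hrun : pfaRun δ S (w.take i ++ [a]) = C := by
      rw [pfaRun_append, show pfaRun δ S (w.take i) = f i from rfl, hfi,
        pfaRun_cons, if_pos (by rw [← hD] at *; exact hDdef)]
      rfl
    by_cases hC1' : C.card = 1
    · have hsync : pfaSync δ S (w.take i ++ [a]) := by
        show (pfaRun δ S (w.take i ++ [a])).card = 1
        rw [hrun]; exact hC1'
      have hlenle := hmin _ hsync
      have : (w.take i ++ [a]).length = min i l + 1 := by simp [hwl]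
      omega
    · have hC2' : C.card = 2 := by omega
      obtain ⟨j, hjl, hfj⟩ := hsurj C (Or.inl hC2')
      have hi'j : i' < j := by
        by_contra hcon
        push_neg at hcon
        have := hmono j i' hcon
        rw [hfj, hC2'] at this
        omega
      have hsync : pfaSync δ S ((w.take i ++ [a]) ++ w.drop j) := by
        show (pfaRun δ S ((w.take i ++ [a]) ++ w.drop j)).card = 1
        rw [pfaRun_append, hrun, ← hfj,
          show pfaRun δ (f j) (w.drop j) = pfaRun δ S w from by
            rw [← pfaRun_append, List.take_append_drop]]
        exact hw1
      have hlenle := hmin _ hsync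
      have : ((w.take i ++ [a]) ++ w.drop j).length = min i l + (l - j + 1) := by
        simp [hwl]
      omega
  -- positions of the two 3-sets through the merging pair
  have hD1card : (insert r {p, q} : Finset (Fin n)).card = 3 := by
    rw [Finset.card_insert_of_notMem (by simp [hrpq.1, hrpq.2]), hpqcard]
  have hD2card : (insert s {p, q} : Finset (Fin n)).card = 3 := by
    rw [Finset.card_insert_of_notMem (by simp [hspq.1, hspq.2]), hpqcard]
  obtain ⟨i1, hi1l, hfi1⟩ := hsurj _ (Or.inr hD1card)
  obtain ⟨i2, hi2l, hfi2⟩ := hsurj _ (Or.inr hD2card)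
  have hne12 : i1 ≠ i2 := by
    intro h
    rw [h, hfi2] at hfi1
    have : r ∈ (insert s {p, q} : Finset (Fin n)) := hfi1 ▸ Finset.mem_insert_self r _
    rw [Finset.mem_insert, Finset.mem_insert, Finset.mem_singleton] at this
    rcases this with h | h | h
    · exact hrs h
    · exact hrpq.1 h
    · exact hrpq.2 h
  rcases Nat.lt_or_ge i1 i2 with h | h
  · exact key r hrB i1 i2 hi1l hi2l hfi1 (by rw [hfi2]; exact hD2card) h
  · exact key s hsB i2 i1 hi2l hi1l hfi2 (by rw [hfi1]; exact hD1card)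
      (lt_of_le_of_ne h (Ne.symm hne12))
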